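/- Let ε be a real number with 0 ≤ ε < 1/6 and let u, a, b, d, w, c, v ∈ [0, 1] satisfy the threshold responses TR(u, a), TR(a, b), TR(b, d), TR(d, w), TR(u + b, c), and TR(c, v), where TR(S, y) means: if S > 1/2 + ε then y ≤ ε, and if S < 1/2 − ε then y ≥ 1 − ε. Then: (1) if u ≤ ε then v ≤ ε and w ≤ ε; (2) if u ≥ 1 − ε then v ≥ 1 − ε and w ≥ 1 − ε; and (3) it is not the case that both v ∈ (ε, 1 − ε) and w ∈ (ε, 1 − ε); in fact, if w ∈ (ε, 1 − ε) then v ≥ 1 − ε. -/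
import Mathlib


/-- The ε-approximate equilibrium response of a threshold-game player with
in-neighbour sum `S` and value `y`. -/
def TR (ε S y : ℝ) : Prop :=
  (1 / 2 + ε < S → y ≤ ε) ∧ (S < 1 / 2 - ε → 1 - ε ≤ y)

/-- Correctness of the PURIFY-gate gadget in the threshold-game reduction,
for every `ε < 1/6`: input node `u`, auxiliary nodes `a, b, d, c`, output
nodes `w, v`, wired as `TR(u,a)`, `TR(a,b)`, `TR(b,d)`, `TR(d,w)`,
`TR(u+b,c)`, `TR(c,v)`. -/
theorem threshold_purify_gadget (ε u a b d w c v : ℝ)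
    (hε0 : 0 ≤ ε) (hε1 : ε < 1 / 6)
    (hu : u ∈ Set.Icc (0:ℝ) 1) (ha : a ∈ Set.Icc (0:ℝ) 1)
    (hb : b ∈ Set.Icc (0:ℝ) 1) (hd : d ∈ Set.Icc (0:ℝ) 1)
    (hw : w ∈ Set.Icc (0:ℝ) 1) (hc : c ∈ Set.Icc (0:ℝ) 1)
    (hv : v ∈ Set.Icc (0:ℝ) 1)
    (h1 : TR ε u a) (h2 : TR ε a b) (h3 : TR ε b d) (h4 : TR ε d w)
    (h5 : TR ε (u + b) c) (h6 : TR ε c v) :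
    (u ≤ ε → v ≤ ε ∧ w ≤ ε) ∧
    (1 - ε ≤ u → 1 - ε ≤ v ∧ 1 - ε ≤ w) ∧
    ¬(v ∈ Set.Ioo ε (1 - ε) ∧ w ∈ Set.Ioo ε (1 - ε)) ∧
    (w ∈ Set.Ioo ε (1 - ε) → 1 - ε ≤ v) := by
  obtain ⟨h1a, h1b⟩ := h1
  obtain ⟨h2a, h2b⟩ := h2
  obtain ⟨h3a, h3b⟩ := h3
  obtain ⟨h4a, h4b⟩ := h4
  obtain ⟨h5a, h5b⟩ := h5
  obtain ⟨h6a, h6b⟩ := h6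
  have key : w ∈ Set.Ioo ε (1 - ε) → 1 - ε ≤ v := by
    intro ⟨hw1, hw2⟩
    have hd1 : d ≤ 1 / 2 + ε := by
      by_contra h; push_neg at h; have := h4a h; linarith
    have hd2 : 1 / 2 - ε ≤ d := by
      by_contra h; push_neg at h; have := h4b h; linarith
    have hb1 : b ≤ 1 / 2 + ε := by
      by_contra h; push_neg at h; have := h3a h; linarith
    have hb2 : 1 / 2 - ε ≤ b := by
      by_contra h; push_neg at h; have := h3b h; linarith
    have ha1 : a ≤ 1 / 2 + ε := by
      by_contra h; push_neg at h; have := h2a h; linarith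
    have hu1 : 1 / 2 - ε ≤ u := by
      by_contra h; push_neg at h; have := h1b h; linarith
    have hc1 : c ≤ ε := h5a (by linarith)
    exact h6b (by linarith)
  refine ⟨?_, ?_, ?_, key⟩
  · intro h
    have ha1 : 1 - ε ≤ a := h1b (by linarith)
    have hb1 : b ≤ ε := h2a (by linarith)
    have hd1 : 1 - ε ≤ d := h3b (by linarith)
    have hw1 : w ≤ ε := h4a (by linarith)
    have hc1 : 1 - ε ≤ c := h5b (by linarith)
    exact ⟨h6a (by linarith), hw1⟩
  · intro h
    have ha1 : a ≤ ε := h1a (by linarith)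
    have hb1 : 1 - ε ≤ b := h2b (by linarith)
    have hd1 : d ≤ ε := h3a (by linarith)
    have hw1 : 1 - ε ≤ w := h4b (by linarith)
    have hc1 : c ≤ ε := h5a (by linarith)
    exact ⟨h6b (by linarith), hw1⟩
  · rintro ⟨⟨hv1, hv2⟩, hwm⟩
    have := key hwm
    linarith
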